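/- (Chazy equation correspondence.) Let U ⊆ ℂ be open and let γ : U → ℂ be three times differentiable. Then the function f(t2, t3) := −(1/16)·t2⁴·γ(t3) satisfies the WDVV equation f_{222}·f_{233} + f_{333} = (f_{223})² at every point (t2, t3) ∈ ℂ × U if and only if γ satisfies the Chazy equation γ'''(t3) = 6·γ(t3)·γ''(t3) − 9·(γ'(t3))² at every t3 ∈ U. -/

import Mathlib

noncomputable section

/-- Partial derivative with respect to the first variable `t₂`. -/
def pd2 (f : ℂ → ℂ → ℂ) : ℂ → ℂ → ℂ := fun a b => deriv (fun s => f s b) a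

/-- Partial derivative with respect to the second variable `t₃`. -/
def pd3 (f : ℂ → ℂ → ℂ) : ℂ → ℂ → ℂ := fun a b => deriv (fun s => f a s) b

lemma pd2_pow (g : ℂ → ℂ) (c d : ℂ) (n m : ℕ) (h : m + 1 = n) (hc : d = n * c) :
    pd2 (fun a b => c * a ^ n * g b) = fun a b => d * a ^ m * g b := by
  subst h
  funext a b
  have h : HasDerivAt (fun s : ℂ => c * s ^ (m+1) * g b) (d * a ^ m * g b) a := by
    have := ((hasDerivAt_pow (m+1) a).const_mul c).mul_const (g b)
    rw [show c * (↑(m + 1) * a ^ (m + 1 - 1)) * g b = d * a ^ m * g b by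
      rw [Nat.add_sub_cancel, hc]
      push_cast
      ring] at this
    exact this
  exact h.deriv

lemma pd3_monomial (g : ℂ → ℂ) (c : ℂ) (n : ℕ) :
    pd3 (fun a b => c * a ^ n * g b) = fun a b => c * a ^ n * deriv g b := by
  funext a b
  show deriv (fun s => c * a ^ n * g s) b = _
  rw [deriv_const_mul_field]

/-- **Chazy equation correspondence**: `f(t₂,t₃) = −(1/16)t₂⁴γ(t₃)` satisfies the
WDVV equation `f₂₂₂ f₂₃₃ + f₃₃₃ = (f₂₂₃)²` on `ℂ × U` if and only if `γ` satisfies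
the Chazy equation `γ''' = 6γγ'' − 9(γ')²` on `U`. -/
theorem chazy_correspondence
    (U : Set ℂ) (hU : IsOpen U) (γ : ℂ → ℂ)
    (hγ : ∀ t ∈ U, DifferentiableAt ℂ γ t ∧ DifferentiableAt ℂ (deriv γ) t ∧
      DifferentiableAt ℂ (deriv (deriv γ)) t) :
    (∀ a : ℂ, ∀ b ∈ U,
      pd2 (pd2 (pd2 (fun t2 t3 => -(1/16) * t2^4 * γ t3))) a b *
          pd3 (pd3 (pd2 (fun t2 t3 => -(1/16) * t2^4 * γ t3))) a b
        + pd3 (pd3 (pd3 (fun t2 t3 => -(1/16) * t2^4 * γ t3))) a b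
        = (pd3 (pd2 (pd2 (fun t2 t3 => -(1/16) * t2^4 * γ t3))) a b) ^ 2)
    ↔ (∀ t ∈ U,
        deriv (deriv (deriv γ)) t = 6 * γ t * deriv (deriv γ) t - 9 * (deriv γ t) ^ 2) := by
  have h2 : pd2 (fun t2 t3 => -(1/16) * t2^4 * γ t3)
      = fun a b => -(1/4) * a ^ 3 * γ b :=
    pd2_pow γ (-(1/16)) (-(1/4)) 4 3 rfl (by norm_num)
  have h22 : pd2 (pd2 (fun t2 t3 => -(1/16) * t2^4 * γ t3))
      = fun a b => -(3/4) * a ^ 2 * γ b := by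
    rw [h2]; exact pd2_pow γ (-(1/4)) (-(3/4)) 3 2 rfl (by norm_num)
  have h222 : pd2 (pd2 (pd2 (fun t2 t3 => -(1/16) * t2^4 * γ t3)))
      = fun a b => -(3/2) * a ^ 1 * γ b := by
    rw [h22]; exact pd2_pow γ (-(3/4)) (-(3/2)) 2 1 rfl (by norm_num)
  have h223 : pd3 (pd2 (pd2 (fun t2 t3 => -(1/16) * t2^4 * γ t3)))
      = fun a b => -(3/4) * a ^ 2 * deriv γ b := by
    rw [h22, pd3_monomial]
  have h23 : pd3 (pd2 (fun t2 t3 => -(1/16) * t2^4 * γ t3))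
      = fun a b => -(1/4) * a ^ 3 * deriv γ b := by
    rw [h2, pd3_monomial]
  have h233 : pd3 (pd3 (pd2 (fun t2 t3 => -(1/16) * t2^4 * γ t3)))
      = fun a b => -(1/4) * a ^ 3 * deriv (deriv γ) b := by
    rw [h23, pd3_monomial]
  have h3 : pd3 (fun t2 t3 => -(1/16) * t2^4 * γ t3)
      = fun a b => -(1/16) * a ^ 4 * deriv γ b := pd3_monomial γ (-(1/16)) 4
  have h333 : pd3 (pd3 (pd3 (fun t2 t3 => -(1/16) * t2^4 * γ t3)))
      = fun a b => -(1/16) * a ^ 4 * deriv (deriv (deriv γ)) b := by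
    rw [h3, pd3_monomial, pd3_monomial]
  rw [h222, h223, h233, h333]
  constructor
  · intro H t ht
    have := H 1 t ht
    simp only [one_pow, mul_one] at this
    linear_combination (-16 : ℂ) * this
  · intro H a b hb
    have := H b hb
    simp only []
    linear_combination (-(1/16) * a ^ 4) * this
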